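/- Let I_1,…,I_k be finite sets and Φ ⊆ Ψ ⊆ I_1×⋯×I_k. If Ψ ⊵ Φ (Φ is a combinatorial degeneration of Ψ), then Q̃(Ψ) ≥ Q̃(Φ), i.e., the asymptotic subrank of Ψ is at least the asymptotic subrank of Φ. -/

import Mathlib

open scoped BigOperators
open scoped Classical
open scoped ComplexOrder

noncomputable section

namespace CVZ

variable {k : ℕ}

/-- A concrete `k`-tensor over `F` with index types `I i`: the coefficient array
(in the standard bases) of a multilinear map `V₁ × ⋯ × V_k → F` with `dim V_i = |I i|`. -/
abbrev Tensor (F : Type*) (I : Fin k → Type*) : Type _ := (∀ i, I i) → F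

section Basic

variable {F : Type*} [Field F] {I J : Fin k → Type*}
  [∀ i, Fintype (I i)] [∀ i, DecidableEq (I i)]
  [∀ i, Fintype (J i)] [∀ i, DecidableEq (J i)]

/-- Coefficient array of the restriction `f ∘ (A₁, …, A_k)`, where `A_i : W_i → V_i`
is given by the matrix `A i`. -/
def restrictBy (A : ∀ i, Matrix (I i) (J i) F) (t : Tensor F I) : Tensor F J :=
  fun β => ∑ α : ∀ i, I i, (∏ i, A i (α i) (β i)) * t α

/-- `t` restricts to `s`. -/
def Restricts (t : Tensor F I) (s : Tensor F J) : Prop :=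
  ∃ A : ∀ i, Matrix (I i) (J i) F, restrictBy A t = s

/-- A choice of bases of the spaces `V_i`, encoded as a tuple of invertible matrices. -/
def IsBasisTuple (B : ∀ i, Matrix (I i) (I i) F) : Prop := ∀ i, IsUnit (B i)

/-- Support of a tensor (with respect to the standard bases). -/
def supp (t : Tensor F I) : Set (∀ i, I i) := {α | t α ≠ 0}

end Basic

section Entropy

/-- A probability distribution on the finite set `X`. -/
def IsProbDist {X : Type*} [Fintype X] (P : X → ℝ) : Prop :=
  (∀ x, 0 ≤ P x) ∧ ∑ x, P x = 1

/-- Base-2 Shannon entropy. -/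
def H2 {X : Type*} [Fintype X] (P : X → ℝ) : ℝ :=
  ∑ x, -(P x * Real.logb 2 (P x))

variable {I : Fin k → Type*} [∀ i, Fintype (I i)] [∀ i, DecidableEq (I i)]

/-- The `i`-th marginal of a distribution on a product set. -/
def marg (P : (∀ i, I i) → ℝ) (i : Fin k) : I i → ℝ :=
  fun a => ∑ α : ∀ i, I i, if α i = a then P α else 0

/-- `H_θ(P)`, the `θ`-weighted average of the marginal entropies. -/
def Hw (θ : Fin k → ℝ) (P : (∀ i, I i) → ℝ) : ℝ :=
  ∑ i, θ i * H2 (marg P i)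

/-- `H_θ(Φ)`, the supremum of `H_θ(P)` over distributions `P` supported on `Φ`. -/
def HwSet (θ : Fin k → ℝ) (Φ : Set (∀ i, I i)) : ℝ :=
  sSup {h | ∃ P : (∀ i, I i) → ℝ, IsProbDist P ∧ (∀ α, P α ≠ 0 → α ∈ Φ) ∧ h = Hw θ P}

/-- Maximal points of a subset of the product order. -/
def maxPoints [∀ i, LinearOrder (I i)] (Φ : Set (∀ i, I i)) : Set (∀ i, I i) :=
  {α | α ∈ Φ ∧ ∀ β ∈ Φ, ¬ α < β}

end Entropy

section SuppFunc

variable {F : Type*} [Field F] {I : Fin k → Type*} [∀ i, Fintype (I i)] [∀ i, DecidableEq (I i)]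

/-- The logarithmic Strassen upper support functional `ρ^θ`. -/
def rhoUpper (θ : Fin k → ℝ) (t : Tensor F I) : ℝ :=
  sInf {h | ∃ B : ∀ i, Matrix (I i) (I i) F, IsBasisTuple B ∧
    h = HwSet θ (supp (restrictBy B t))}

/-- The Strassen upper support functional `ζ^θ`. -/
def zetaUpper (θ : Fin k → ℝ) (t : Tensor F I) : ℝ :=
  if t = 0 then 0 else (2 : ℝ) ^ rhoUpper θ t

/-- The logarithmic Strassen lower support functional `ρ_θ`. -/
def rhoLower [∀ i, LinearOrder (I i)] (θ : Fin k → ℝ) (t : Tensor F I) : ℝ :=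
  sSup {h | ∃ B : ∀ i, Matrix (I i) (I i) F, IsBasisTuple B ∧
    h = HwSet θ (maxPoints (supp (restrictBy B t)))}

/-- The Strassen lower support functional `ζ_θ`. -/
def zetaLower [∀ i, LinearOrder (I i)] (θ : Fin k → ℝ) (t : Tensor F I) : ℝ :=
  if t = 0 then 0 else (2 : ℝ) ^ rhoLower θ t

/-- The instability of a tensor. -/
def instab (t : Tensor F I) : ℝ :=
  sSup {ε : ℝ | 0 ≤ ε ∧ ∃ B : ∀ i, Matrix (I i) (I i) F, IsBasisTuple B ∧
    ∃ w : ∀ i, I i → ℝ, (∀ i x, 0 ≤ w i x) ∧ (∀ i, ∃ x, w i x ≠ 0) ∧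
      ∀ a ∈ supp (restrictBy B t), ∑ i, w i (a i) ≤
        ∑ i, ((∑ x : I i, w i x) / (Fintype.card (I i) : ℝ) - ε * ⨆ x : I i, w i x)}

end SuppFunc

section Ops

variable {F : Type*} [Field F]

/-- The unit tensor `⟨r⟩`. -/
def unitTensor (F : Type*) [Field F] (k r : ℕ) : Tensor F (fun _ : Fin k => Fin r) :=
  fun α => if ∀ i j : Fin k, α i = α j then 1 else 0

variable {n m : Fin k → ℕ}

/-- Direct sum of two tensors, with the concatenated (naturally ordered) bases. -/
def dirSumFin (s : Tensor F fun i => Fin (n i)) (t : Tensor F fun i => Fin (m i)) :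
    Tensor F fun i => Fin (n i + m i) :=
  fun α =>
    (if h : ∀ i, (α i : ℕ) < n i then s (fun i => ⟨(α i : ℕ), h i⟩) else 0) +
    (if h : ∀ i, n i ≤ (α i : ℕ) then
      t (fun i => ⟨(α i : ℕ) - n i, by have h1 := (α i).isLt; have h2 := h i; omega⟩) else 0)

/-- Tensor (Kronecker) product of two tensors, with the product bases ordered naturally. -/
def tensMulFin (s : Tensor F fun i => Fin (n i)) (t : Tensor F fun i => Fin (m i)) :
    Tensor F fun i => Fin (n i * m i) :=
  fun α =>
    s (fun i => ⟨(α i : ℕ) / m i, by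
      have h := (α i).isLt
      exact Nat.div_lt_of_lt_mul (lt_of_lt_of_le h (Nat.mul_comm (n i) (m i)).le)⟩) *
    t (fun i => ⟨(α i : ℕ) % m i, by
      have h := (α i).isLt
      have hpos : 0 < n i * m i := Nat.lt_of_le_of_lt (Nat.zero_le _) h
      have hm : 0 < m i := by
        rcases Nat.eq_zero_or_pos (m i) with h0 | h0
        · simp [h0] at hpos
        · exact h0
      exact Nat.mod_lt _ hm⟩)

/-- The `N`-th tensor power of a tensor (grouping the legs into `k` groups). -/
def tpow {I : Fin k → Type*} (t : Tensor F I) (N : ℕ) : Tensor F fun i => Fin N → I i :=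
  fun α => ∏ j : Fin N, t fun i => α i j

end Ops

section Subrank

variable {F : Type*} [Field F] {I : Fin k → Type*} [∀ i, Fintype (I i)] [∀ i, DecidableEq (I i)]

/-- The subrank `Q(t)` of a tensor: the largest `r` with `⟨r⟩ ≤ t`. -/
def Qtensor (t : Tensor F I) : ℕ :=
  sSup {r : ℕ | Restricts t (unitTensor F k r)}

/-- A slice: a tensor of the form `v ⊗ w` with `v` in the `j`-th leg. -/
def IsSlice (s : Tensor F I) : Prop :=
  ∃ (j : Fin k) (v : I j → F) (w : (∀ i : {i : Fin k // i ≠ j}, I i.1) → F),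
    ∀ α, s α = v (α j) * w (fun i => α i.1)

/-- The slice rank of a tensor. -/
def sliceRank (t : Tensor F I) : ℕ :=
  sInf {r : ℕ | ∃ c : Fin r → Tensor F I, (∀ a, IsSlice (c a)) ∧ t = ∑ a, c a}

end Subrank

section Combinatorial

variable {I : Fin k → Type*}

/-- A diagonal: any two distinct elements differ in all coordinates. -/
def IsDiagonal (D : Set (∀ i, I i)) : Prop :=
  ∀ a ∈ D, ∀ b ∈ D, a ≠ b → ∀ i, a i ≠ b i

/-- The `i`-th projection of a set of tuples. -/
def projSet (D : Set (∀ i, I i)) (i : Fin k) : Set (I i) := {x | ∃ a ∈ D, a i = x}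

/-- A free diagonal in `Φ`: a diagonal `D` with `D = Φ ∩ (D₁ × ⋯ × D_k)`. -/
def IsFreeDiagonal (D Φ : Set (∀ i, I i)) : Prop :=
  IsDiagonal D ∧ D = Φ ∩ {a | ∀ i, a i ∈ projSet D i}

/-- The (combinatorial) subrank of a set: the maximal size of a free diagonal. -/
def Qset (Φ : Set (∀ i, I i)) : ℕ :=
  sSup {r : ℕ | ∃ D : Set (∀ i, I i), IsFreeDiagonal D Φ ∧ D.ncard = r}

/-- The `N`-fold coordinatewise power of a set of tuples. -/
def setPow (Φ : Set (∀ i, I i)) (N : ℕ) : Set (∀ i, Fin N → I i) :=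
  {α | ∀ j : Fin N, (fun i => α i j) ∈ Φ}

/-- A tight set. -/
def TightSet (Φ : Set (∀ i, I i)) : Prop :=
  ∃ u : ∀ i, I i → ℤ, (∀ i, Function.Injective (u i)) ∧ ∀ α ∈ Φ, ∑ i, u i (α i) = 0

/-- `Φ` is a combinatorial degeneration of `Ψ` (written `Ψ ⊵ Φ`). -/
def CombDegen (Ψ Φ : Set (∀ i, I i)) : Prop :=
  Φ ⊆ Ψ ∧ ∃ u : ∀ i, I i → ℤ,
    (∀ α ∈ Φ, ∑ i, u i (α i) = 0) ∧ ∀ α ∈ Ψ, α ∉ Φ → 0 < ∑ i, u i (α i)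

end Combinatorial

/-- A tight tensor: some basis tuple gives a tight support. -/
def TightTensor {F : Type*} [Field F] {I : Fin k → Type*} [∀ i, Fintype (I i)]
    [∀ i, DecidableEq (I i)] (t : Tensor F I) : Prop :=
  ∃ B : ∀ i, Matrix (I i) (I i) F, IsBasisTuple B ∧ TightSet (supp (restrictBy B t))

/-- A complete (decreasing) flag of subspaces, `W 0 = ⊤` and `dim (W j) = dim V − j`. -/
def IsCompleteFlag (F : Type*) [Field F] {V : Type*} [AddCommGroup V] [Module F V]
    (W : ℕ → Submodule F V) : Prop :=
  Antitone W ∧ W 0 = ⊤ ∧ ∀ j : ℕ, Module.finrank F (W j) = Module.finrank F V - j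

/-- Evaluation of (the multilinear map associated with) `t` at a tuple of vectors. -/
def eval {F : Type*} [Field F] {I : Fin k → Type*} [∀ i, Fintype (I i)] [∀ i, DecidableEq (I i)]
    (t : Tensor F I) (v : ∀ i, I i → F) : F :=
  ∑ α : ∀ i, I i, (∏ i, v i (α i)) * t α

/-- The support of `t` with respect to a tuple of complete flags. -/
def suppFlag {F : Type*} [Field F] {n : Fin k → ℕ} (t : Tensor F fun i => Fin (n i))
    (W : ∀ i, ℕ → Submodule F (Fin (n i) → F)) : Set (∀ i, Fin (n i)) :=
  {α | ∃ v : ∀ i, Fin (n i) → F, (∀ i, v i ∈ W i (α i : ℕ)) ∧ eval t v ≠ 0}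

section Quantum

variable {I : Fin k → Type*} [∀ i, Fintype (I i)] [∀ i, DecidableEq (I i)]

/-- Von Neumann entropy (base 2) of a Hermitian matrix. -/
def vnEntropy {d : Type*} [Fintype d] [DecidableEq d] (ρ : Matrix d d ℂ) : ℝ :=
  if h : ρ.IsHermitian then ∑ x, -(h.eigenvalues x * Real.logb 2 (h.eigenvalues x)) else 0

/-- The `j`-th marginal (reduced density matrix) of the pure state `|t⟩⟨t| / ⟨t|t⟩`. -/
def margMat (t : Tensor ℂ I) (j : Fin k) : Matrix (I j) (I j) ℂ :=
  fun a b =>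
    (∑ α : ∀ i, I i, ∑ β : ∀ i, I i,
      if α j = a ∧ β j = b ∧ (∀ i, i ≠ j → α i = β i) then t α * star (t β) else 0) /
    ∑ α : ∀ i, I i, t α * star (t α)

/-- The logarithmic lower quantum functional `E_θ` for `θ` a distribution on `[k]`. -/
def Ewq (θ : Fin k → ℝ) (t : Tensor ℂ I) : ℝ :=
  sSup {h | ∃ A : ∀ i, Matrix (I i) (I i) ℂ, IsBasisTuple A ∧
    h = ∑ j, θ j * vnEntropy (margMat (restrictBy A t) j)}

/-- The marginal (reduced density matrix) on the legs in `S` of the pure state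
`|t⟩⟨t| / ⟨t|t⟩`. -/
def margMatSet (t : Tensor ℂ I) (S : Finset (Fin k)) :
    Matrix (∀ i : {x : Fin k // x ∈ S}, I i.1) (∀ i : {x : Fin k // x ∈ S}, I i.1) ℂ :=
  fun a b =>
    (∑ α : ∀ i, I i, ∑ β : ∀ i, I i,
      if (∀ (i : Fin k) (hi : i ∈ S), α i = a ⟨i, hi⟩ ∧ β i = b ⟨i, hi⟩) ∧
         (∀ i, i ∉ S → α i = β i)
      then t α * star (t β) else 0) /
    ∑ α : ∀ i, I i, t α * star (t α)

/-- A probability distribution on the bipartitions `{S, S̄}` of `[k]` (encoded by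
choosing a representative `S` for each bipartition occurring in the support). -/
def IsBipDist (θ : Finset (Fin k) → ℝ) : Prop :=
  (∀ S, 0 ≤ θ S) ∧ (∀ S, θ S ≠ 0 → S.Nonempty ∧ Sᶜ.Nonempty) ∧
    ∑ S : Finset (Fin k), θ S = 1

/-- The logarithmic lower quantum functional `E_θ` for `θ` a distribution on bipartitions. -/
def EwqBip (θ : Finset (Fin k) → ℝ) (t : Tensor ℂ I) : ℝ :=
  sSup {h | ∃ A : ∀ i, Matrix (I i) (I i) ℂ, IsBasisTuple A ∧
    h = ∑ S : Finset (Fin k), θ S * vnEntropy (margMatSet (restrictBy A t) S)}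

/-- The lower quantum functional `F_θ`. -/
def FwqBip (θ : Finset (Fin k) → ℝ) (t : Tensor ℂ I) : ℝ :=
  if t = 0 then 0 else (2 : ℝ) ^ EwqBip θ t

/-- Degeneration: `t` lies in the closure of the `GL × ⋯ × GL`-orbit of `s`. -/
def Degen (s t : Tensor ℂ I) : Prop :=
  t ∈ closure {u : Tensor ℂ I | ∃ A : ∀ i, Matrix (I i) (I i) ℂ,
    IsBasisTuple A ∧ restrictBy A s = u}

end Quantum

/-- Trace norm of a complex matrix: `Tr √(AᴴA)`. -/
def traceNorm {d : Type*} [Fintype d] [DecidableEq d] (A : Matrix d d ℂ) : ℝ :=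
  (((Matrix.posSemidef_conjTranspose_mul_self A).1.eigenvectorUnitary : Matrix d d ℂ) *
    Matrix.diagonal (((↑) : ℝ → ℂ) ∘ (Real.sqrt ∘ (Matrix.posSemidef_conjTranspose_mul_self A).1.eigenvalues)) *
    (star (Matrix.posSemidef_conjTranspose_mul_self A).1.eigenvectorUnitary : Matrix d d ℂ)).trace.re

/-- `conjIter ρ X j = X_j ⋯ X_2 X_1 ρ X_1 X_2 ⋯ X_j`. -/
def conjIter {d : Type*} [Fintype d] (ρ : Matrix d d ℂ) {n : ℕ}
    (X : Fin n → Matrix d d ℂ) : ℕ → Matrix d d ℂ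
  | 0 => ρ
  | (j + 1) => if h : j < n then X ⟨j, h⟩ * conjIter ρ X j * X ⟨j, h⟩ else conjIter ρ X j

/-- A tricolored sum-free set in `G × G × G`. -/
def IsTriColoredSumFree {G : Type*} [AddCommGroup G] (Γ : Set (G × G × G)) : Prop :=
  (∀ a ∈ Γ, ∀ b ∈ Γ, a ≠ b → a.1 ≠ b.1 ∧ a.2.1 ≠ b.2.1 ∧ a.2.2 ≠ b.2.2) ∧
  ∀ x y z : G, (∃ a ∈ Γ, a.1 = x) → (∃ a ∈ Γ, a.2.1 = y) → (∃ a ∈ Γ, a.2.2 = z) →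
    (x + y + z = 0 ↔ (x, y, z) ∈ Γ)

/-- The maximal size `s₃(G)` of a tricolored sum-free set in `G × G × G`. -/
def s3 (G : Type*) [AddCommGroup G] : ℕ :=
  sSup {r : ℕ | ∃ Γ : Set (G × G × G), IsTriColoredSumFree Γ ∧ Γ.ncard = r}

/-- Binary entropy function (base 2), with the convention `0 · log 0 = 0`. -/
def binH (p : ℝ) : ℝ := -(p * Real.logb 2 p) - (1 - p) * Real.logb 2 (1 - p)

open Filter Topology


private lemma key_bound {k : ℕ} {I : Fin k → Type*} [∀ i, Fintype (I i)]
    {Φ Ψ : Set (∀ i, I i)} (h : CombDegen Ψ Φ) :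
    ∃ M : ℕ, ∀ N : ℕ, Qset (setPow Φ N) ≤ (2 * M * N + 1) ^ k * Qset (setPow Ψ N) := by
  classical
  obtain ⟨hsub, u, hu0, hupos⟩ := h
  refine ⟨∑ i, ∑ x, (u i x).natAbs, fun N => ?_⟩
  set M := ∑ i, ∑ x, (u i x).natAbs with hMdef
  have hMb : ∀ i (x : I i), (u i x).natAbs ≤ M := by
    intro i x
    calc (u i x).natAbs ≤ ∑ x, (u i x).natAbs :=
          Finset.single_le_sum (f := fun x => (u i x).natAbs)
            (fun _ _ => Nat.zero_le _) (Finset.mem_univ x)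
      _ ≤ M := Finset.single_le_sum (f := fun i => ∑ x, (u i x).natAbs)
          (fun _ _ => Nat.zero_le _) (Finset.mem_univ i)
  apply csSup_le'
  rintro r ⟨D, hfree, rfl⟩
  by_cases hDe : D = ∅
  · simp [hDe]
  have hDfin : D.Finite := D.toFinite
  set S : Finset (∀ i, Fin N → I i) := hDfin.toFinset with hSdef
  have hmemS : ∀ a, a ∈ S ↔ a ∈ D := fun a => hDfin.mem_toFinset
  have hDΦ : D ⊆ setPow Φ N := by
    rw [hfree.2]; exact Set.inter_subset_left
  set F : (∀ i, Fin N → I i) → (Fin k → ℤ) := fun a i => ∑ j, u i (a i j) with hFdef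
  have hF0 : ∀ a, a ∈ setPow Φ N → ∑ i, F a i = 0 := by
    intro a ha
    calc ∑ i, F a i = ∑ j : Fin N, ∑ i, u i (a i j) := Finset.sum_comm
      _ = 0 := Finset.sum_eq_zero fun j _ => hu0 (fun i => a i j) (ha j)
  obtain ⟨a0, ha0⟩ : ∃ a, a ∈ S := by
    obtain ⟨a, ha⟩ := Set.nonempty_iff_ne_empty.mpr hDe
    exact ⟨a, (hmemS a).mpr ha⟩
  set Tgt := S.image F with hTdef
  have hmaps : ∀ a ∈ S, F a ∈ Tgt := fun a ha => Finset.mem_image_of_mem F ha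
  obtain ⟨c, hcT, hcmax⟩ := Finset.exists_max_image Tgt
    (fun c => (S.filter fun a => F a = c).card) ⟨F a0, hmaps a0 ha0⟩
  have hcard1 : S.card ≤ Tgt.card * (S.filter fun a => F a = c).card := by
    rw [Finset.card_eq_sum_card_fiberwise hmaps]
    simpa using Finset.sum_le_card_nsmul Tgt _ _ (fun c' hc' => hcmax c' hc')
  have hT : Tgt.card ≤ (2 * M * N + 1) ^ k := by
    set B : ℕ := M * N with hBdef
    have hsub' : Tgt ⊆ Fintype.piFinset fun _ : Fin k =>
        Finset.Icc (-(B : ℤ)) (B : ℤ) := by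
      intro c' hc'
      obtain ⟨a, _, rfl⟩ := Finset.mem_image.mp hc'
      rw [Fintype.mem_piFinset]
      intro i
      rw [Finset.mem_Icc, ← abs_le]
      simp only [hFdef]
      calc |∑ j, u i (a i j)| ≤ ∑ j : Fin N, |u i (a i j)| := Finset.abs_sum_le_sum_abs _ _
        _ ≤ ∑ _j : Fin N, (M : ℤ) := Finset.sum_le_sum fun j _ => by
              rw [Int.abs_eq_natAbs]; exact_mod_cast hMb i (a i j)
        _ = (B : ℤ) := by
              rw [Finset.sum_const, Finset.card_univ, Fintype.card_fin, nsmul_eq_mul, hBdef]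
              push_cast; ring
    calc Tgt.card ≤ (Fintype.piFinset fun _ : Fin k =>
          Finset.Icc (-(B : ℤ)) (B : ℤ)).card := Finset.card_le_card hsub'
      _ = (2 * M * N + 1) ^ k := by
          rw [Fintype.card_piFinset]
          have hIcc : (Finset.Icc (-(B : ℤ)) (B : ℤ)).card = 2 * B + 1 := by
            rw [Int.card_Icc]; omega
          have h2B : 2 * B + 1 = 2 * M * N + 1 := by rw [hBdef]; ring
          simp [hIcc, h2B]
  set S' := S.filter fun a => F a = c with hS'def
  have hS'ne : S'.Nonempty := by
    obtain ⟨a, haS, hFa⟩ := Finset.mem_image.mp hcT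
    exact ⟨a, Finset.mem_filter.mpr ⟨haS, hFa⟩⟩
  have hS'c : ∀ a ∈ S', F a = c := fun a ha => (Finset.mem_filter.mp ha).2
  have hS'D : ∀ a ∈ S', a ∈ D := fun a ha => (hmemS a).mp (Finset.mem_filter.mp ha).1
  have hcsum : ∑ i, c i = 0 := by
    obtain ⟨a, ha⟩ := hS'ne
    rw [← hS'c a ha]
    exact hF0 a (hDΦ (hS'D a ha))
  set D' : Set (∀ i, Fin N → I i) := ↑S' with hD'def
  have hD'S' : ∀ a, a ∈ D' ↔ a ∈ S' := fun a => Finset.mem_coe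
  have hD'D : D' ⊆ D := fun a ha => hS'D a ((hD'S' a).mp ha)
  have hfree' : IsFreeDiagonal D' (setPow Ψ N) := by
    constructor
    · intro a ha b hb hneq
      exact hfree.1 a (hD'D ha) b (hD'D hb) hneq
    · apply Set.Subset.antisymm
      · intro β hβ
        exact ⟨fun j => hsub (hDΦ (hD'D hβ) j), fun i => ⟨β, hβ, rfl⟩⟩
      · rintro β ⟨hβΨ, hproj⟩
        choose a haD' hai using hproj
        have hFβ : ∀ i, F β i = c i := by
          intro i
          have h1 : F β i = F (a i) i := by
            simp only [hFdef]
            exact Finset.sum_congr rfl fun j _ => by rw [← hai i]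
          rw [h1, hS'c (a i) ((hD'S' _).mp (haD' i))]
        have hβΦ : β ∈ setPow Φ N := by
          have hnn : ∀ j : Fin N, 0 ≤ ∑ i, u i (β i j) := by
            intro j
            by_cases hj : (fun i => β i j) ∈ Φ
            · rw [hu0 _ hj]
            · exact le_of_lt (hupos _ (hβΨ j) hj)
          have hzero : ∑ j : Fin N, ∑ i, u i (β i j) = 0 := by
            calc ∑ j : Fin N, ∑ i, u i (β i j) = ∑ i, F β i := Finset.sum_comm
              _ = ∑ i, c i := Finset.sum_congr rfl fun i _ => hFβ i
              _ = 0 := hcsum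
          intro j
          by_contra hj
          have h1 : 0 < ∑ i, u i (β i j) := hupos _ (hβΨ j) hj
          have h2 : ∑ i, u i (β i j) = 0 :=
            (Finset.sum_eq_zero_iff_of_nonneg (fun j _ => hnn j)).mp hzero j (Finset.mem_univ j)
          omega
        have hβD : β ∈ D := by
          rw [hfree.2]
          exact ⟨hβΦ, fun i => ⟨a i, hD'D (haD' i), hai i⟩⟩
        rcases isEmpty_or_nonempty (Fin k) with hk | hk
        · obtain ⟨a1, ha1⟩ := hS'ne
          have hβa : β = a1 := funext fun i => hk.elim i
          rw [hβa]
          exact (hD'S' a1).mpr ha1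
        · obtain ⟨i⟩ := hk
          by_cases hba : β = a i
          · rw [hba]; exact haD' i
          · exact absurd (hai i).symm (hfree.1 β hβD (a i) (hD'D (haD' i)) hba i)
  have hQ : S'.card ≤ Qset (setPow Ψ N) := by
    apply le_csSup
    · refine ⟨(Set.univ : Set (∀ i, Fin N → I i)).ncard, ?_⟩
      rintro r ⟨E, _, rfl⟩
      exact Set.ncard_le_ncard (Set.subset_univ E) Set.finite_univ
    · exact ⟨D', hfree', by rw [hD'def, Set.ncard_coe_finset]⟩
  calc D.ncard = S.card := Set.ncard_eq_toFinset_card D hDfin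
    _ ≤ Tgt.card * S'.card := hcard1
    _ ≤ (2 * M * N + 1) ^ k * Qset (setPow Ψ N) := Nat.mul_le_mul hT hQ

/-- combinatorial degeneration: asymptotic subrank ≥ asymptotic subrank. -/
theorem statement13 {k : ℕ} {I : Fin k → Type*} [∀ i, Fintype (I i)]
    (Φ Ψ : Set (∀ i, I i)) (h : CombDegen Ψ Φ) (LΦ LΨ : ℝ)
    (hΨ : Tendsto (fun N : ℕ => (Qset (setPow Ψ N) : ℝ) ^ ((N : ℝ)⁻¹)) atTop (𝓝 LΨ))
    (hΦ : Tendsto (fun N : ℕ => (Qset (setPow Φ N) : ℝ) ^ ((N : ℝ)⁻¹)) atTop (𝓝 LΦ)) :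
    LΦ ≤ LΨ := by
  obtain ⟨M, hM⟩ := key_bound h
  have hg1 : Tendsto (fun N : ℕ => (N : ℝ) ^ ((N : ℝ)⁻¹)) atTop (𝓝 1) := by
    have := tendsto_rpow_div.comp (tendsto_natCast_atTop_atTop (R := ℝ))
    simpa [Function.comp_def, one_div] using this
  have hgU : Tendsto (fun N : ℕ => ((N : ℝ) ^ ((N : ℝ)⁻¹)) ^ (2 * k)) atTop (𝓝 1) := by
    simpa using hg1.pow (2 * k)
  have hg : Tendsto (fun N : ℕ => (((2 * M * N + 1) ^ k : ℕ) : ℝ) ^ ((N : ℝ)⁻¹))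
      atTop (𝓝 1) := by
    apply tendsto_of_tendsto_of_tendsto_of_le_of_le' tendsto_const_nhds hgU
    · filter_upwards with N
      have h1 : (1 : ℝ) ≤ (((2 * M * N + 1) ^ k : ℕ) : ℝ) := by
        have : 1 ≤ (2 * M * N + 1) ^ k := Nat.one_le_pow _ _ (by omega)
        exact_mod_cast this
      exact Real.one_le_rpow h1 (by positivity)
    · filter_upwards [eventually_ge_atTop (2 * M + 1)] with N hN
      have h1 : 1 ≤ N := by omega
      have hb : ((2 * M * N + 1 : ℕ) : ℝ) ≤ (N : ℝ) ^ 2 := by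
        have h2 : (2 * M * N + 1 : ℕ) ≤ N * N := by nlinarith
        calc ((2 * M * N + 1 : ℕ) : ℝ) ≤ ((N * N : ℕ) : ℝ) := by exact_mod_cast h2
          _ = (N : ℝ) ^ 2 := by push_cast; ring
      have hN0 : (0 : ℝ) ≤ (N : ℝ) := by positivity
      calc (((2 * M * N + 1) ^ k : ℕ) : ℝ) ^ ((N : ℝ)⁻¹)
          = (((2 * M * N + 1 : ℕ) : ℝ) ^ k) ^ ((N : ℝ)⁻¹) := by rw [Nat.cast_pow]
        _ ≤ (((N : ℝ) ^ 2) ^ k) ^ ((N : ℝ)⁻¹) := by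
            apply Real.rpow_le_rpow (by positivity)
              (pow_le_pow_left₀ (by positivity) hb k) (by positivity)
        _ = ((N : ℝ) ^ ((N : ℝ)⁻¹)) ^ (2 * k) := by
            rw [← pow_mul, ← Real.rpow_natCast ((N : ℝ)) (2 * k),
              ← Real.rpow_natCast ((N : ℝ) ^ ((N : ℝ)⁻¹)) (2 * k),
              ← Real.rpow_mul hN0, ← Real.rpow_mul hN0, mul_comm]
  have hmul : Tendsto (fun N : ℕ => (((2 * M * N + 1) ^ k : ℕ) : ℝ) ^ ((N : ℝ)⁻¹) *
      (Qset (setPow Ψ N) : ℝ) ^ ((N : ℝ)⁻¹)) atTop (𝓝 (1 * LΨ)) := hg.mul hΨ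
  have hle : ∀ N : ℕ, (Qset (setPow Φ N) : ℝ) ^ ((N : ℝ)⁻¹) ≤
      (((2 * M * N + 1) ^ k : ℕ) : ℝ) ^ ((N : ℝ)⁻¹) *
        (Qset (setPow Ψ N) : ℝ) ^ ((N : ℝ)⁻¹) := by
    intro N
    rw [← Real.mul_rpow (by positivity) (by positivity)]
    apply Real.rpow_le_rpow (by positivity) ?_ (by positivity)
    exact_mod_cast hM N
  have hfin := le_of_tendsto_of_tendsto' hΦ hmul hle
  linarith


end CVZ

end
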